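/- For non-zero f ∈ W^{s,p}(ℝⁿ) with 0 < s < 1, 1 < p < n/s, there exists c > 0 depending only on f and p such that for every ξ ∈ S^{n-1} and every s ∈ (0,1): ∫_0^∞ t^{-ps-1} ∫_{ℝⁿ} |f(x+tξ)−f(x)|^p dx dt ≥ c. Equivalently, the fractional L^p polar projection body Π*_{s,p} f is contained in c^{-1/(ps)} B^n, uniformly bounded. -/

import Mathlib

open MeasureTheory
open scoped ENNReal

theorem stmt_11 (n : ℕ) (p : ℝ) (hp : 1 < p)
    (f : EuclideanSpace ℝ (Fin n) → ℝ)
    (hf : MemLp f (ENNReal.ofReal p) volume)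
    (hne : ¬ f =ᵐ[(volume : Measure (EuclideanSpace ℝ (Fin n)))] 0)
    (hsob : ∀ s ∈ Set.Ioo (0 : ℝ) 1, p < n / s →
      ∫⁻ x, ∫⁻ y, ENNReal.ofReal (|f x - f y| ^ p / ‖x - y‖ ^ ((n : ℝ) + p * s)) < ⊤) :
    ∃ c : ℝ, 0 < c ∧ ∀ s ∈ Set.Ioo (0 : ℝ) 1, ∀ ξ : EuclideanSpace ℝ (Fin n), ‖ξ‖ = 1 →
      ENNReal.ofReal c ≤
        ∫⁻ t in Set.Ioi (0 : ℝ), ENNReal.ofReal (t ^ (-(p * s) - 1)) *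
          ∫⁻ x, ENNReal.ofReal (|f (x + t • ξ) - f x| ^ p) := by
  classical
  have hp0 : (0 : ℝ) < p := lt_trans one_pos hp
  set q : ℝ≥0∞ := ENNReal.ofReal p with hqdef
  have hq0 : q ≠ 0 := by
    simp only [hqdef, ne_eq, ENNReal.ofReal_eq_zero, not_le]; exact hp0
  have hqtop : q ≠ ⊤ := ENNReal.ofReal_ne_top
  have hq1 : 1 ≤ q := by
    rw [hqdef, ← ENNReal.ofReal_one]; exact ENNReal.ofReal_le_ofReal hp.le
  have hqr : q.toReal = p := ENNReal.toReal_ofReal hp0.le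
  obtain ⟨g, hgm, hfg⟩ := hf.1
  have hgm' : Measurable g := hgm.measurable
  -- key identity : the lintegral of |h|^p equals (eLpNorm h q)^p
  have hkey : ∀ (h : EuclideanSpace ℝ (Fin n) → ℝ) (ν : Measure (EuclideanSpace ℝ (Fin n))),
      (∫⁻ x, ENNReal.ofReal (|h x| ^ p) ∂ν) = eLpNorm h q ν ^ p := by
    intro h ν
    rw [eLpNorm_eq_lintegral_rpow_enorm_toReal hq0 hqtop, hqr, ← ENNReal.rpow_mul, one_div,
      inv_mul_cancel₀ hp0.ne', ENNReal.rpow_one]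
    refine lintegral_congr fun x => ?_
    rw [Real.enorm_eq_ofReal_abs, ENNReal.ofReal_rpow_of_nonneg (abs_nonneg _) hp0.le]
  -- eLpNorm of g via lintegral
  have hsn : ∀ ν : Measure (EuclideanSpace ℝ (Fin n)),
      eLpNorm g q ν = (∫⁻ x, (‖g x‖₊ : ℝ≥0∞) ^ p ∂ν) ^ (1 / p) := by
    intro ν; rw [eLpNorm_eq_lintegral_rpow_enorm_toReal hq0 hqtop, hqr]; rfl
  set F : EuclideanSpace ℝ (Fin n) → ℝ≥0∞ := fun x => (‖g x‖₊ : ℝ≥0∞) ^ p with hFdef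
  set I : ℝ≥0∞ := ∫⁻ x, F x with hIdef
  set L : ℝ≥0∞ := eLpNorm g q volume with hLdef
  have hL : L = I ^ (1 / p) := hsn volume
  have hLtop : L ≠ ⊤ := by
    rw [hLdef, eLpNorm_congr_ae hfg.symm]
    exact hf.2.ne
  have hL0 : L ≠ 0 := by
    intro h
    rw [hLdef, eLpNorm_eq_zero_iff hgm.aestronglyMeasurable hq0] at h
    exact hne (hfg.trans h)
  have hIL : I = L ^ p := by
    rw [hL, ← ENNReal.rpow_mul, one_div, inv_mul_cancel₀ hp0.ne', ENNReal.rpow_one]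
  have hI0 : I ≠ 0 := by
    rw [hIL]
    simp [ENNReal.rpow_eq_zero_iff, hL0, hLtop, hp0, not_lt.2 hp0.le]
  have hItop : I ≠ ⊤ := by
    rw [hIL]; exact (ENNReal.rpow_lt_top_of_nonneg hp0.le hLtop).ne
  -- choose a radius k with small tail
  have htail : ∃ k : ℕ,
      (∫⁻ x in (Metric.ball (0 : EuclideanSpace ℝ (Fin n)) (k : ℝ))ᶜ, F x) ≤ I / 4 := by
    set ν : Measure (EuclideanSpace ℝ (Fin n)) := volume.withDensity F with hν
    have hFm : Measurable F := hgm'.nnnorm.coe_nnreal_ennreal.pow_const p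
    have hνs : ∀ s : Set (EuclideanSpace ℝ (Fin n)), MeasurableSet s →
        ν s = ∫⁻ x in s, F x := fun s hs => withDensity_apply F hs
    have hmeas : ∀ k : ℕ,
        NullMeasurableSet ((Metric.ball (0 : EuclideanSpace ℝ (Fin n)) (k : ℝ))ᶜ) ν :=
      fun k => (Metric.isOpen_ball.measurableSet.compl).nullMeasurableSet
    have hanti : Antitone fun k : ℕ => (Metric.ball (0 : EuclideanSpace ℝ (Fin n)) (k : ℝ))ᶜ := by
      intro j k hjk
      exact Set.compl_subset_compl.2 (Metric.ball_subset_ball (by exact_mod_cast hjk))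
    have hfin : ∃ k : ℕ, ν ((Metric.ball (0 : EuclideanSpace ℝ (Fin n)) (k : ℝ))ᶜ) ≠ ∞ := by
      refine ⟨0, ?_⟩
      refine ne_top_of_le_ne_top ?_ (measure_mono (Set.subset_univ _))
      rw [hν, withDensity_apply F MeasurableSet.univ, Measure.restrict_univ]
      exact hItop
    have hempty : (⋂ k : ℕ, (Metric.ball (0 : EuclideanSpace ℝ (Fin n)) (k : ℝ))ᶜ) = ∅ := by
      ext x
      simp only [Set.mem_iInter, Set.mem_compl_iff, Metric.mem_ball, Set.mem_empty_iff_false,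
        iff_false, not_forall, not_not]
      obtain ⟨k, hk⟩ := exists_nat_gt (dist x 0)
      exact ⟨k, hk⟩
    have htend := tendsto_measure_iInter_atTop hmeas hanti hfin
    rw [hempty, measure_empty] at htend
    rw [ENNReal.tendsto_atTop_zero] at htend
    obtain ⟨k, hk⟩ := htend (I / 4) (ENNReal.div_pos hI0 (by norm_num))
    refine ⟨k, ?_⟩
    rw [← hνs _ Metric.isOpen_ball.measurableSet.compl]
    exact hk k le_rfl
  obtain ⟨k, hk⟩ := htail
  set R : ℝ := max (k : ℝ) 1 with hRdef
  have hR1 : (1 : ℝ) ≤ R := le_max_right _ _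
  have hR0 : (0 : ℝ) < R := lt_of_lt_of_le one_pos hR1
  have hBc : (∫⁻ x in (Metric.ball (0 : EuclideanSpace ℝ (Fin n)) R)ᶜ, F x) ≤ I / 4 := by
    refine le_trans (lintegral_mono_set ?_) hk
    exact Set.compl_subset_compl.2 (Metric.ball_subset_ball (le_max_left _ _))
  -- arithmetic on I
  have h4t : I / 4 ≠ ⊤ := (ENNReal.div_lt_top hItop (by norm_num)).ne
  have h2t : I / 2 ≠ ⊤ := (ENNReal.div_lt_top hItop (by norm_num)).ne
  have hIr : 0 < I.toReal := ENNReal.toReal_pos hI0 hItop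
  have h42 : I / 4 < I / 2 := by
    rw [← ENNReal.toReal_lt_toReal h4t h2t, ENNReal.toReal_div, ENNReal.toReal_div]
    simp only [ENNReal.toReal_ofNat]
    linarith
  have hJB : I / 2 ≤ ∫⁻ x in Metric.ball (0 : EuclideanSpace ℝ (Fin n)) R, F x := by
    have hadd : (∫⁻ x in Metric.ball (0 : EuclideanSpace ℝ (Fin n)) R, F x)
        + ∫⁻ x in (Metric.ball (0 : EuclideanSpace ℝ (Fin n)) R)ᶜ, F x = I :=
      lintegral_add_compl F Metric.isOpen_ball.measurableSet
    have h1 : I ≤ (∫⁻ x in Metric.ball (0 : EuclideanSpace ℝ (Fin n)) R, F x) + I / 4 := by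
      calc I = _ := hadd.symm
        _ ≤ (∫⁻ x in Metric.ball (0 : EuclideanSpace ℝ (Fin n)) R, F x) + I / 4 :=
          add_le_add_right hBc _
    have h2 : I / 2 + I / 4
        ≤ (∫⁻ x in Metric.ball (0 : EuclideanSpace ℝ (Fin n)) R, F x) + I / 4 := by
      refine le_trans ?_ h1
      calc I / 2 + I / 4 ≤ I / 2 + I / 2 := add_le_add_right h42.le _
        _ = I := ENNReal.add_halves I
    exact (ENNReal.add_le_add_iff_right h4t).1 h2
  set a : ℝ≥0∞ := (I / 2) ^ (1 / p) with hadef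
  set b : ℝ≥0∞ := (I / 4) ^ (1 / p) with hbdef
  have hba : b < a := ENNReal.rpow_lt_rpow h42 (by positivity)
  set η : ℝ≥0∞ := a - b with hηdef
  have hη0 : η ≠ 0 := (tsub_pos_of_lt hba).ne'
  have hηtop : η ≠ ⊤ := by
    refine ne_top_of_le_ne_top ?_ tsub_le_self
    exact (ENNReal.rpow_lt_top_of_nonneg (by positivity) h2t).ne
  -- main lower bound for large translations
  have hmain : ∀ v : EuclideanSpace ℝ (Fin n), 2 * R ≤ ‖v‖ →
      η ^ p ≤ ∫⁻ x, ENNReal.ofReal (|f (x + v) - f x| ^ p) := by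
    intro v hv
    have hφ : MeasurePreserving (fun x : EuclideanSpace ℝ (Fin n) => x + v) volume volume :=
      measurePreserving_add_right volume v
    have hae : (fun x => ENNReal.ofReal (|f (x + v) - f x| ^ p)) =ᵐ[volume]
        fun x => ENNReal.ofReal (|g (x + v) - g x| ^ p) := by
      have h1 : (f ∘ fun x : EuclideanSpace ℝ (Fin n) => x + v) =ᵐ[volume]
          (g ∘ fun x : EuclideanSpace ℝ (Fin n) => x + v) :=
        ae_eq_comp hφ.measurable.aemeasurable (by rw [hφ.map_eq]; exact hfg)
      filter_upwards [h1, hfg] with x hx1 hx2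
      simp only [Function.comp_apply] at hx1
      rw [hx1, hx2]
    rw [lintegral_congr_ae hae, hkey (fun x => g (x + v) - g x) volume]
    refine ENNReal.rpow_le_rpow ?_ hp0.le
    set u : EuclideanSpace ℝ (Fin n) → ℝ := fun x => g (x + v) with hudef
    have hum : AEStronglyMeasurable u volume :=
      (hgm.comp_measurable (measurable_add_const v)).aestronglyMeasurable
    -- step: eLpNorm of u over ball 0 R equals eLpNorm of g over ball v R
    have hpre : (fun x : EuclideanSpace ℝ (Fin n) => x + v) ⁻¹' Metric.ball v R
        = Metric.ball (0 : EuclideanSpace ℝ (Fin n)) R := by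
      ext x
      simp [Metric.mem_ball, dist_eq_norm, add_sub_cancel_right]
    have hstep3 : eLpNorm u q (volume.restrict (Metric.ball (0 : EuclideanSpace ℝ (Fin n)) R))
        = eLpNorm g q (volume.restrict (Metric.ball v R)) := by
      rw [← hpre]
      exact eLpNorm_comp_measurePreserving hgm.aestronglyMeasurable.restrict
        (hφ.restrict_preimage Metric.isOpen_ball.measurableSet)
    -- ball v R is in the complement of ball 0 R
    have hsub : Metric.ball v R ⊆ (Metric.ball (0 : EuclideanSpace ℝ (Fin n)) R)ᶜ := by
      intro x hx
      rw [Metric.mem_ball, dist_eq_norm] at hx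
      simp only [Set.mem_compl_iff, Metric.mem_ball, dist_zero_right, not_lt]
      have h3 := abs_norm_sub_norm_le x v
      have h4 : ‖v‖ - ‖x‖ ≤ |‖x‖ - ‖v‖| := by
        rw [abs_sub_comm]; exact le_abs_self _
      linarith
    have hstep4 : eLpNorm u q (volume.restrict (Metric.ball (0 : EuclideanSpace ℝ (Fin n)) R))
        ≤ b := by
      rw [hstep3, hsn, hbdef]
      refine ENNReal.rpow_le_rpow ?_ (by positivity)
      exact le_trans (lintegral_mono_set hsub) hBc
    have hstep5 : a ≤ eLpNorm g q
        (volume.restrict (Metric.ball (0 : EuclideanSpace ℝ (Fin n)) R)) := by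
      rw [hsn, hadef]
      exact ENNReal.rpow_le_rpow hJB (by positivity)
    -- reverse triangle inequality
    have htri : eLpNorm g q (volume.restrict (Metric.ball (0 : EuclideanSpace ℝ (Fin n)) R))
        ≤ eLpNorm (u - g) q (volume.restrict (Metric.ball (0 : EuclideanSpace ℝ (Fin n)) R))
          + eLpNorm u q (volume.restrict (Metric.ball (0 : EuclideanSpace ℝ (Fin n)) R)) := by
      have h1 := eLpNorm_add_le
        ((hgm.aestronglyMeasurable.sub hum).restrict
          (s := Metric.ball (0 : EuclideanSpace ℝ (Fin n)) R))
        (hum.restrict (s := Metric.ball (0 : EuclideanSpace ℝ (Fin n)) R)) hq1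
      have heq : g - u + u = g := by funext x; simp
      have heq2 : g - u = -(u - g) := by rw [neg_sub]
      rw [heq, heq2, eLpNorm_neg] at h1
      exact h1
    have hX : η ≤ eLpNorm (u - g) q
        (volume.restrict (Metric.ball (0 : EuclideanSpace ℝ (Fin n)) R)) := by
      rw [hηdef, tsub_le_iff_right]
      calc a ≤ _ := hstep5
        _ ≤ _ := htri
        _ ≤ _ + b := add_le_add_right hstep4 _
    calc η ≤ _ := hX
      _ ≤ eLpNorm (u - g) q volume := eLpNorm_mono_measure _ Measure.restrict_le_self
      _ = eLpNorm (fun x => g (x + v) - g x) q volume := rfl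
  -- conclusion
  have hηp0 : η ^ p ≠ 0 := by
    simp [ENNReal.rpow_eq_zero_iff, hη0, hηtop, not_lt.2 hp0.le]
  have hηpt : η ^ p ≠ ⊤ := (ENNReal.rpow_lt_top_of_nonneg hp0.le hηtop).ne
  set T : ℝ := 2 * R with hTdef
  have hT1 : (1 : ℝ) ≤ T := by rw [hTdef]; linarith
  refine ⟨(T + 1) ^ (-p - 1) * (η ^ p).toReal, ?_, ?_⟩
  · have h1 : (0:ℝ) < (T + 1) ^ (-p - 1) := Real.rpow_pos_of_pos (by linarith) _
    have h2 : 0 < (η ^ p).toReal := ENNReal.toReal_pos hηp0 hηpt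
    positivity
  intro s hs ξ hξ
  obtain ⟨hs0, hs1⟩ := hs
  have hchain : ENNReal.ofReal ((T + 1) ^ (-p - 1) * (η ^ p).toReal)
      = ENNReal.ofReal ((T + 1) ^ (-p - 1)) * η ^ p := by
    rw [ENNReal.ofReal_mul (Real.rpow_pos_of_pos (by linarith) _).le, ENNReal.ofReal_toReal hηpt]
  rw [hchain]
  have hsubset : Set.Ioc T (T + 1) ⊆ Set.Ioi (0 : ℝ) := by
    intro t ht
    exact lt_trans (by linarith) ht.1
  refine le_trans ?_ (lintegral_mono_set hsubset)
  have hconst : ENNReal.ofReal ((T + 1) ^ (-p - 1)) * η ^ p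
      = ∫⁻ _ in Set.Ioc T (T + 1), ENNReal.ofReal ((T + 1) ^ (-p - 1)) * η ^ p := by
    rw [setLIntegral_const, Real.volume_Ioc, show T + 1 - T = 1 by ring, ENNReal.ofReal_one,
      mul_one]
  rw [hconst]
  refine lintegral_mono_ae ((ae_restrict_iff' measurableSet_Ioc).2 (ae_of_all _ fun t ht => ?_))
  obtain ⟨htl, htr⟩ := ht
  have ht0 : (0 : ℝ) < t := lt_of_le_of_lt (by linarith) htl
  have ht1 : (1 : ℝ) ≤ t := le_trans hT1 htl.le
  refine mul_le_mul' ?_ ?_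
  · refine ENNReal.ofReal_le_ofReal ?_
    calc (T + 1) ^ (-p - 1) ≤ t ^ (-p - 1) :=
          Real.rpow_le_rpow_of_nonpos ht0 htr (by linarith)
      _ ≤ t ^ (-(p * s) - 1) := by
          refine Real.rpow_le_rpow_of_exponent_le ht1 ?_
          have hps : p * s ≤ p := by
            calc p * s ≤ p * 1 := mul_le_mul_of_nonneg_left hs1.le hp0.le
              _ = p := mul_one p
          linarith
  · have hnorm : 2 * R ≤ ‖t • ξ‖ := by
      rw [norm_smul, hξ, mul_one, Real.norm_eq_abs, abs_of_pos ht0]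
      rw [hTdef] at htl
      linarith
    exact hmain (t • ξ) hnorm
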